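/- Let d ≥ 2 and let (v,M), (v',M') ∈ ℂ^d ⊕ so(d,ℂ) both satisfy: v_j = 0 for 1 ≤ j ≤ d−1, v_d ≠ 0, M_{j,j+1} ≠ 0 for all 1 ≤ j ≤ d−1, and M_{j,k} = 0 for all k > j+1 (and likewise for (v',M')). Then there exists a diagonal matrix D with diagonal entries in {−1,1} such that D v = v' and D M D = M' if and only if (v_d)² = (v'_d)² and (M_{j,j+1})² = (M'_{j,j+1})² for all 1 ≤ j ≤ d−1. (The squared coordinates c_d², c₁₂², …, c_{(d−1)d}² separate the orbits of W_d(ℂ) on the generic part of the relative section.) -/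

import Mathlib

open Matrix

private def sgnSeq (q : ℕ → ℂ) (a : ℂ) : ℕ → ℂ
  | 0 => a
  | n + 1 => q (n + 1) * sgnSeq q a n

private lemma sgnSeq_sq (q : ℕ → ℂ) (a : ℂ) (hq : ∀ n, q n ^ 2 = 1)
    (ha : a ^ 2 = 1) : ∀ n, sgnSeq q a n ^ 2 = 1 := by
  intro n
  induction n with
  | zero => simpa [sgnSeq] using ha
  | succ n ih => simp [sgnSeq, mul_pow, ih, hq]

/-- the squared coordinates `c_d², c₁₂², …, c_{(d−1)d}²` separate the
orbits of `W_d(ℂ)` (diagonal sign matrices) on the generic part of the relative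
section. (0-based indices.) -/
theorem stmt12 {d : ℕ} (hd : 2 ≤ d)
    (v v' : Fin d → ℂ) (M M' : Matrix (Fin d) (Fin d) ℂ)
    (hMskew : Mᵀ = -M) (hM'skew : M'ᵀ = -M')
    (hv1 : ∀ j : Fin d, (j : ℕ) + 1 < d → v j = 0)
    (hv2 : v ⟨d - 1, by omega⟩ ≠ 0)
    (hM1 : ∀ j k : Fin d, (k : ℕ) = (j : ℕ) + 1 → M j k ≠ 0)
    (hM2 : ∀ j k : Fin d, (j : ℕ) + 1 < (k : ℕ) → M j k = 0)
    (hv1' : ∀ j : Fin d, (j : ℕ) + 1 < d → v' j = 0)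
    (hv2' : v' ⟨d - 1, by omega⟩ ≠ 0)
    (hM1' : ∀ j k : Fin d, (k : ℕ) = (j : ℕ) + 1 → M' j k ≠ 0)
    (hM2' : ∀ j k : Fin d, (j : ℕ) + 1 < (k : ℕ) → M' j k = 0) :
    (∃ D : Matrix (Fin d) (Fin d) ℂ,
        (∀ j k : Fin d, j ≠ k → D j k = 0) ∧
        (∀ j : Fin d, D j j = 1 ∨ D j j = -1) ∧
        D.mulVec v = v' ∧ D * M * D = M') ↔
      ((v ⟨d - 1, by omega⟩) ^ 2 = (v' ⟨d - 1, by omega⟩) ^ 2 ∧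
       ∀ j k : Fin d, (k : ℕ) = (j : ℕ) + 1 → (M j k) ^ 2 = (M' j k) ^ 2) := by
  have hd1 : d - 1 < d := by omega
  constructor
  · rintro ⟨D, hDoff, hDsign, hDv, hDM⟩
    have hDdiag : D = diagonal (fun i => D i i) := by
      ext i j
      by_cases h : i = j
      · subst h; simp
      · simp [diagonal_apply_ne _ h, hDoff i j h]
    have hsq : ∀ i : Fin d, D i i ^ 2 = 1 := by
      intro i; rcases hDsign i with h | h <;> simp [h]
    constructor
    · have h := congrFun hDv ⟨d - 1, hd1⟩
      rw [hDdiag] at h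
      rw [mulVec_diagonal] at h
      rw [← h, mul_pow, hsq, one_mul]
    · intro j k hk
      have h : M' j k = D j j * M j k * D k k := by
        rw [← hDM, hDdiag]
        rw [Matrix.mul_apply]
        simp [Matrix.mul_apply, diagonal_apply, Finset.sum_ite_eq,
          Finset.mul_sum]
      rw [h, mul_pow, mul_pow, hsq, hsq, one_mul, mul_one]
  · rintro ⟨hv, hM⟩
    set a : ℂ := v' ⟨d - 1, hd1⟩ / v ⟨d - 1, hd1⟩ with ha_def
    have ha : a ^ 2 = 1 := by
      rw [ha_def, div_pow, ← hv, div_self (pow_ne_zero _ hv2)]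
    set Q : ℕ → ℂ := fun j =>
      if h : j + 1 < d then M' ⟨j, by omega⟩ ⟨j + 1, h⟩ / M ⟨j, by omega⟩ ⟨j + 1, h⟩
      else 1 with hQ_def
    have hQsq : ∀ n, Q n ^ 2 = 1 := by
      intro n
      rw [hQ_def]
      dsimp only
      split
      · rename_i h
        rw [div_pow, hM ⟨n, by omega⟩ ⟨n + 1, h⟩ rfl,
          div_self (pow_ne_zero _ (hM1' ⟨n, by omega⟩ ⟨n + 1, h⟩ rfl))]
      · simp
    set ε : ℕ → ℂ := fun j => sgnSeq (fun n => Q (d - 1 - n)) a (d - 1 - j) with hε_def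
    have hεsq : ∀ j, ε j ^ 2 = 1 := fun j =>
      sgnSeq_sq _ _ (fun n => hQsq _) ha _
    have hεmul : ∀ j, ε j * ε j = 1 := by
      intro j; have := hεsq j; rwa [sq] at this
    have hεlast : ε (d - 1) = a := by
      rw [hε_def]; simp [sgnSeq]
    have hεstep : ∀ j, j + 1 ≤ d - 1 → ε j = Q j * ε (j + 1) := by
      intro j hj
      have h1 : d - 1 - j = (d - 1 - (j + 1)) + 1 := by omega
      have h2 : d - 1 - ((d - 1 - (j + 1)) + 1) = j := by omega
      rw [hε_def]
      dsimp only
      rw [h1, sgnSeq, h2]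
    have key : ∀ j k : Fin d, (k : ℕ) = (j : ℕ) + 1 →
        ε j * M j k * ε k = M' j k := by
      intro j k hk
      have hjd : (j : ℕ) + 1 < d := by
        have := k.isLt; omega
      have hQj : Q j = M' j k / M j k := by
        rw [hQ_def]
        dsimp only
        rw [dif_pos hjd]
        congr 1 <;> [skip; skip] <;> congr 1 <;>
          first
            | exact Fin.ext rfl
            | exact Fin.ext (by simp [hk])
      have hstep := hεstep j (by omega)
      have hk' : (j : ℕ) + 1 = (k : ℕ) := hk.symm
      rw [hstep, hk', hQj]
      have hM0 := hM1 j k hk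
      field_simp
      rw [hεsq, mul_one]
    refine ⟨diagonal (fun i : Fin d => ε (i : ℕ)), ?_, ?_, ?_, ?_⟩
    · intro j k hjk; exact diagonal_apply_ne _ hjk
    · intro j
      have := hεsq (j : ℕ)
      have h : (ε j - 1) * (ε j + 1) = 0 := by ring_nf; linear_combination this
      rcases mul_eq_zero.mp h with h | h
      · left; simpa [diagonal_apply_eq, sub_eq_zero] using h
      · right; simp only [diagonal_apply_eq]
        linear_combination h
    · funext i
      rw [mulVec_diagonal]
      by_cases hi : (i : ℕ) + 1 < d
      · rw [hv1 i hi, hv1' i hi, mul_zero]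
      · have hi' : (i : ℕ) = d - 1 := by have := i.isLt; omega
        have hieq : i = ⟨d - 1, hd1⟩ := Fin.ext hi'
        rw [hieq]
        show ε (d - 1) * v ⟨d - 1, hd1⟩ = v' ⟨d - 1, hd1⟩
        rw [hεlast, ha_def, div_mul_cancel₀ _ hv2]
    · ext j k
      have hDMD : (diagonal (fun i : Fin d => ε (i : ℕ)) * M *
          diagonal (fun i : Fin d => ε (i : ℕ))) j k
          = ε j * M j k * ε k := by
        rw [Matrix.mul_apply]
        simp [Matrix.mul_apply, diagonal_apply, Finset.sum_ite_eq]
      rw [hDMD]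
      rcases lt_trichotomy (j : ℕ) (k : ℕ) with h | h | h
      · rcases Nat.lt_or_ge ((j : ℕ) + 1) (k : ℕ) with h2 | h2
        · rw [hM2 j k h2, hM2' j k h2, mul_zero, zero_mul]
        · have hk : (k : ℕ) = (j : ℕ) + 1 := by omega
          exact key j k hk
      · have hjk : j = k := Fin.ext h
        subst hjk
        have hMd : M j j = 0 := by
          have := congrFun (congrFun hMskew j) j
          simp only [transpose_apply, Matrix.neg_apply] at this
          linear_combination this / 2
        have hMd' : M' j j = 0 := by
          have := congrFun (congrFun hM'skew j) j
          simp only [transpose_apply, Matrix.neg_apply] at this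
          linear_combination this / 2
        rw [hMd, hMd', mul_zero, zero_mul]
      · have hMa : M j k = -(M k j) := by
          have := congrFun (congrFun hMskew k) j
          simp only [transpose_apply, Matrix.neg_apply] at this
          linear_combination this
        have hMa' : M' j k = -(M' k j) := by
          have := congrFun (congrFun hM'skew k) j
          simp only [transpose_apply, Matrix.neg_apply] at this
          linear_combination this
        rcases Nat.lt_or_ge ((k : ℕ) + 1) (j : ℕ) with h2 | h2
        · rw [hMa, hMa', hM2 k j h2, hM2' k j h2]; simp
        · have hj : (j : ℕ) = (k : ℕ) + 1 := by omega
          have := key k j hj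
          rw [hMa, hMa', ← this]
          ring
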